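/- Let G be a finite weighted graph with vertex set V, and define the bipartite double cover G' with vertex set V' = V × {0,1}, edges (u,0)(v,1) and (u,1)(v,0) for each edge uv of G, and weights w'_{(u,0)(v,1)} = w'_{(u,1)(v,0)} = w_{uv}. Let σ be a probability distribution on V, σ'_{(u,0)} = σ_u, and M ⊆ V with M' = M × {0,1}. Then the total weight satisfies W' = 2W, and the effective resistance satisfies R_{σ',M'}(G') ≤ R_{σ,M}(G). -/

import Mathlib

noncomputable section

variable {V : Type*} [Fintype V]

/-- `p` is a flow from `σ` to `M` on the weighted graph with symmetric weights
`wt`: it is antisymmetric, supported on edges, and has net outflow `σ u` at every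
unmarked vertex `u`. -/
def IsFlow (wt : V → V → ℝ) (σ : V → ℝ) (M : Set V) (p : V → V → ℝ) : Prop :=
  (∀ u v, p v u = -p u v) ∧ (∀ u v, p u v ≠ 0 → 0 < wt u v) ∧
    (∀ u ∉ M, ∑ v, p u v = σ u)

/-- The energy `Σ_e p_e²/w_e` of a flow (each undirected edge counted once). -/
def flowEnergy (wt p : V → V → ℝ) : ℝ :=
  (1 / 2) * ∑ u, ∑ v, (p u v) ^ 2 / wt u v

/-- The effective resistance `R_{σ,M}`: the infimum of energies of flows from
`σ` to `M`. -/
def effRes (wt : V → V → ℝ) (σ : V → ℝ) (M : Set V) : ℝ :=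
  sInf {x | ∃ p, IsFlow wt σ M p ∧ x = flowEnergy wt p}

namespace BDCaux

set_option linter.unusedSectionVars false
set_option maxHeartbeats 1000000

variable [DecidableEq V]

lemma gen_walk (M : Set V) (p : V → V → ℝ)
    (hinv : ∀ b c, 0 < p b c → c ∉ M → ∃ d, 0 < p c d)
    (z : V) (hz : z ∉ M) (hzout : ∃ d, 0 < p z d) :
    (∃ (k : ℕ) (f : ℕ → V), 0 < k ∧ (∀ i < k, 0 < p (f i) (f (i+1))) ∧ f k = f 0) ∨
    (∃ (k : ℕ) (f : ℕ → V), 0 < k ∧ (∀ i < k, 0 < p (f i) (f (i+1))) ∧ f 0 = z ∧ f k ∈ M) := by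
  classical
  let next : V → V := fun c => if hc : c ∉ M ∧ ∃ d, 0 < p c d then hc.2.choose else c
  let seq : ℕ → V := fun n => next^[n] z
  have hseq0 : seq 0 = z := rfl
  have hseqS : ∀ n, seq (n+1) = next (seq n) := fun n => Function.iterate_succ_apply' next n z
  have hnext : ∀ c (hc : c ∉ M ∧ ∃ d, 0 < p c d), 0 < p c (next c) := by
    intro c hc
    have : next c = hc.2.choose := dif_pos hc
    rw [this]; exact hc.2.choose_spec
  have hInv : ∀ n, seq n ∈ M ∨ ∃ d, 0 < p (seq n) d := by
    intro n; induction n with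
    | zero => exact Or.inr hzout
    | succ n ih =>
      by_cases hm : seq n ∈ M
      · have : next (seq n) = seq n := by
          apply dif_neg; intro hc; exact hc.1 hm
        rw [hseqS, this]; exact Or.inl hm
      · rcases ih with h | h
        · exact absurd h hm
        · have hpc := hnext (seq n) ⟨hm, h⟩
          rw [hseqS]
          by_cases hm2 : next (seq n) ∈ M
          · exact Or.inl hm2
          · exact Or.inr (hinv _ _ hpc hm2)
  have hstep : ∀ n, seq n ∉ M → 0 < p (seq n) (seq (n+1)) := by
    intro n hm
    rcases hInv n with h | h
    · exact absurd h hm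
    · rw [hseqS]; exact hnext (seq n) ⟨hm, h⟩
  by_cases hM : ∀ n, n ≤ Fintype.card V → seq n ∉ M
  · left
    have key : ∀ a b : ℕ, a < b → b ≤ Fintype.card V → seq a = seq b →
        (∃ (k : ℕ) (f : ℕ → V), 0 < k ∧ (∀ i < k, 0 < p (f i) (f (i+1))) ∧ f k = f 0) := by
      intro a b hlt hble hab
      refine ⟨b - a, fun n => seq (a + n), Nat.sub_pos_of_lt hlt, ?_, ?_⟩
      · intro i hi
        have h1 : a + i ≤ Fintype.card V := by omega
        have := hstep (a + i) (hM _ h1)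
        simp only []
        have h2 : a + (i + 1) = a + i + 1 := by omega
        rw [h2]; exact this
      · show seq (a + (b - a)) = seq (a + 0)
        have : a + (b - a) = b := by omega
        rw [this, Nat.add_zero, hab]
    have hninj : ¬ Function.Injective (fun m : Fin (Fintype.card V + 1) => seq m) := by
      intro hinj
      have := Fintype.card_le_of_injective _ hinj
      simp at this
    rw [Function.not_injective_iff] at hninj
    obtain ⟨a, b, hab, hne⟩ := hninj
    rcases hne.lt_or_gt with hlt | hlt
    · exact key a b hlt (Nat.lt_succ_iff.mp b.isLt) hab
    · exact key b a hlt (Nat.lt_succ_iff.mp a.isLt) hab.symm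
  · right
    push_neg at hM
    obtain ⟨n, _, hn⟩ := hM
    have hex : ∃ m, seq m ∈ M := ⟨n, hn⟩
    have ht : seq (Nat.find hex) ∈ M := Nat.find_spec hex
    have htmin : ∀ m < Nat.find hex, seq m ∉ M := fun m hm => Nat.find_min hex hm
    have ht0 : 0 < Nat.find hex := by
      rcases Nat.eq_zero_or_pos (Nat.find hex) with h | h
      · rw [h, hseq0] at ht; exact absurd ht hz
      · exact h
    exact ⟨Nat.find hex, seq, ht0, fun i hi => hstep i (htmin i hi), hseq0, ht⟩

lemma exists_pos_term (g : V → ℝ) (h : 0 < ∑ v, g v) : ∃ d, 0 < g d := by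
  by_contra hno
  push_neg at hno
  have : ∑ v, g v ≤ 0 := Finset.sum_nonpos (fun v _ => hno v)
  linarith

lemma exists_neg_term (g : V → ℝ) (hs : ∑ v, g v ≤ 0) (d : V) (hd : 0 < g d) :
    ∃ e, g e < 0 := by
  by_contra hno
  push_neg at hno
  have : ∑ v, (0:ℝ) < ∑ v, g v :=
    Finset.sum_lt_sum (fun v _ => hno v) ⟨d, Finset.mem_univ d, hd⟩
  simp at this
  linarith

lemma extract (M : Set V) (p : V → V → ℝ) (τ : V → ℝ)
    (hanti : ∀ u v, p v u = -p u v)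
    (hτ : ∀ u, u ∉ M → 0 ≤ τ u)
    (hrow : ∀ u, u ∉ M → ∑ v, p u v = τ u)
    (x y : V) (hxy : 0 < p x y) :
    ∃ (k : ℕ) (f : ℕ → V), 0 < k ∧ (∀ i < k, 0 < p (f i) (f (i+1))) ∧
      (f k = f 0 ∨ (f k ∈ M ∧ (f 0 ∈ M ∨ (f 0 ∉ M ∧ 0 < τ (f 0))))) := by
  classical
  have hinv : ∀ b c, 0 < p b c → c ∉ M → ∃ d, 0 < p c d := by
    intro b c hbc hc
    by_contra hno
    push_neg at hno
    have hstrict : ∑ v, p c v < ∑ v, (0:ℝ) :=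
      Finset.sum_lt_sum (fun v _ => hno v)
        ⟨b, Finset.mem_univ b, by rw [hanti b c]; linarith⟩
    rw [hrow c hc] at hstrict
    simp at hstrict
    exact absurd hstrict (not_lt.mpr (hτ c hc))
  by_cases ha : ∃ z, z ∉ M ∧ τ z ≠ 0
  · obtain ⟨z, hz, hτz⟩ := ha
    have hτzpos : 0 < τ z := lt_of_le_of_ne (hτ z hz) (Ne.symm hτz)
    have hzout : ∃ d, 0 < p z d := by
      apply exists_pos_term
      rw [hrow z hz]; exact hτzpos
    rcases gen_walk M p hinv z hz hzout with ⟨k, f, hk, he, hc⟩ | ⟨k, f, hk, he, hf0, hfk⟩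
    · exact ⟨k, f, hk, he, Or.inl hc⟩
    · exact ⟨k, f, hk, he, Or.inr ⟨hfk, Or.inr ⟨hf0 ▸ hz, hf0 ▸ hτzpos⟩⟩⟩
  · push_neg at ha
    have hrow0 : ∀ u, u ∉ M → ∑ v, p u v = 0 := fun u hu => by
      rw [hrow u hu]; exact ha u hu
    by_cases hxM : x ∈ M
    · by_cases hyM : y ∈ M
      · refine ⟨1, fun n => if n = 0 then x else y, one_pos, ?_, ?_⟩
        · intro i hi
          interval_cases i
          simpa using hxy
        · exact Or.inr ⟨by simp [hyM], Or.inl (by simp [hxM])⟩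
      · have hyout : ∃ d, 0 < p y d := hinv x y hxy hyM
        rcases gen_walk M p hinv y hyM hyout with ⟨k, f, hk, he, hc⟩ | ⟨k, f, hk, he, hf0, hfk⟩
        · exact ⟨k, f, hk, he, Or.inl hc⟩
        · refine ⟨k + 1, fun n => if n = 0 then x else f (n - 1), by omega, ?_, ?_⟩
          · intro i hi
            rcases Nat.eq_zero_or_pos i with h0 | h0
            · subst h0; simpa [hf0] using hxy
            · have h1 : i ≠ 0 := by omega
              have h2 : i + 1 ≠ 0 := by omega
              simp only [h1, h2, if_false]
              have h3 : i + 1 - 1 = (i - 1) + 1 := by omega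
              rw [h3]
              exact he (i - 1) (by omega)
          · exact Or.inr ⟨by simp [hfk], Or.inl (by simp [hxM])⟩
    · -- x ∉ M : backward walk in q, then forward walk
      set q : V → V → ℝ := fun u v => p v u with hq
      have hinvq : ∀ b c, 0 < q b c → c ∉ M → ∃ d, 0 < q c d := by
        intro b c hbc hc
        obtain ⟨e, he⟩ := exists_neg_term (p c) (le_of_eq (hrow0 c hc)) b hbc
        refine ⟨e, ?_⟩
        show 0 < p e c
        rw [hanti e c] at he
        linarith
      have hxqout : ∃ d, 0 < q x d := by
        obtain ⟨e, he⟩ := exists_neg_term (p x) (le_of_eq (hrow0 x hxM)) y hxy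
        refine ⟨e, ?_⟩
        show 0 < p e x
        rw [hanti e x] at he
        linarith
      rcases gen_walk M q hinvq x hxM hxqout with ⟨k, fb, hk, heb, hcb⟩ | ⟨t, fb, ht, heb, hfb0, hfbt⟩
      · -- q-cycle, reverse it
        refine ⟨k, fun n => fb (k - n), hk, ?_, Or.inl (by simp [hcb])⟩
        intro i hi
        have h1 : k - i - 1 + 1 = k - i := by omega
        have := heb (k - i - 1) (by omega)
        rw [h1] at this
        have h2 : k - (i + 1) = k - i - 1 := by omega
        simp only [h2]
        exact this
      · -- q-path from x to M; now forward p-walk from x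
        rcases gen_walk M p hinv x hxM ⟨y, hxy⟩ with ⟨k, ff, hk, hef, hcf⟩ | ⟨s, ff, hs, hef, hff0, hffs⟩
        · exact ⟨k, ff, hk, hef, Or.inl hcf⟩
        · refine ⟨t + s, fun n => if n ≤ t then fb (t - n) else ff (n - t), by omega, ?_, ?_⟩
          · intro i hi
            rcases lt_trichotomy i t with hit | hit | hit
            · have h1 : i ≤ t := by omega
              have h2 : i + 1 ≤ t := by omega
              simp only [h1, h2, if_pos]
              have h3 : t - i - 1 + 1 = t - i := by omega
              have := heb (t - i - 1) (by omega)
              rw [h3] at this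
              have h4 : t - (i + 1) = t - i - 1 := by omega
              rw [h4]
              exact this
            · subst hit
              have h1 : i ≤ i := le_refl i
              have h2 : ¬ (i + 1 ≤ i) := by omega
              simp only [h1, h2, if_pos, if_false, Nat.sub_self, Nat.add_sub_cancel_left]
              rw [hfb0, ← hff0]
              exact hef 0 hs
            · have h1 : ¬ (i ≤ t) := by omega
              have h2 : ¬ (i + 1 ≤ t) := by omega
              simp only [h1, h2, if_false]
              have h3 : i + 1 - t = (i - t) + 1 := by omega
              rw [h3]
              exact hef (i - t) (by omega)
          · have h1 : ¬ (t + s ≤ t) := by omega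
            simp only [h1, if_false, le_refl, if_pos, Nat.sub_self, Nat.add_sub_cancel_left]
            refine Or.inr ⟨hffs, Or.inl ?_⟩
            simp only [Nat.zero_le, if_pos, Nat.sub_zero]
            exact hfbt

lemma sum_ind1 (a b u : V) : ∑ v, (if a = u ∧ b = v then (1:ℝ) else 0) = if a = u then 1 else 0 := by
  by_cases h : a = u <;> simp [h]

lemma sum_ind2 (a b u : V) : ∑ v, (if a = v ∧ b = u then (1:ℝ) else 0) = if b = u then 1 else 0 := by
  by_cases h : b = u <;> simp [h]

lemma tele1 (k : ℕ) (f : ℕ → V) (u : V) :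
    ∑ i ∈ Finset.range k, ((if f i = u then (1:ℝ) else 0) - (if f (i+1) = u then 1 else 0))
      = (if f 0 = u then 1 else 0) - (if f k = u then 1 else 0) :=
  Finset.sum_range_sub' (fun i => if f i = u then (1:ℝ) else 0) k

lemma tele2 (k : ℕ) (f : ℕ → V) (u : V) :
    ∑ i ∈ Finset.range k, (-1:ℝ)^i * ((if f i = u then (1:ℝ) else 0) + (if f (i+1) = u then 1 else 0))
      = (if f 0 = u then 1 else 0) - (-1:ℝ)^k * (if f k = u then 1 else 0) := by
  have := Finset.sum_range_sub' (fun i => (-1:ℝ)^i * (if f i = u then (1:ℝ) else 0)) k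
  simp only [pow_zero, one_mul] at this
  rw [← this]
  apply Finset.sum_congr rfl
  intro i _
  rw [pow_succ]
  ring

lemma edge_bound (p A : V → V → ℝ) (ε : ℝ) (hε : 0 ≤ ε)
    (hA0 : ∀ u v, 0 ≤ A u v) (hApos : ∀ u v, A u v ≠ 0 → 0 < p u v)
    (hanti : ∀ u v, p v u = -p u v)
    (hcap : ∀ u v, A u v ≠ 0 → ε * A u v ≤ p u v) (u v : V) :
    |p u v - ε * (A u v - A v u)| + ε * (A u v + A v u) ≤ |p u v| := by
  by_cases h1 : A u v = 0
  · by_cases h2 : A v u = 0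
    · simp [h1, h2]
    · have hp : 0 < p v u := hApos v u h2
      have hc : ε * A v u ≤ p v u := hcap v u h2
      have hpuv : p u v < 0 := by rw [hanti v u]; linarith
      have he2 : 0 ≤ ε * A v u := mul_nonneg hε (hA0 v u)
      have hc' : ε * A v u ≤ -p u v := by rw [hanti v u]; linarith
      rw [h1]
      have e1 : p u v - ε * (0 - A v u) = p u v + ε * A v u := by ring
      rw [e1, abs_of_nonpos (by linarith), abs_of_nonpos (le_of_lt hpuv)]
      ring_nf
      linarith
  · have hp : 0 < p u v := hApos u v h1
    have h2 : A v u = 0 := by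
      by_contra h2
      have := hApos v u h2
      rw [hanti u v] at this
      linarith
    have hc : ε * A u v ≤ p u v := hcap u v h1
    have he2 : 0 ≤ ε * A u v := mul_nonneg hε (hA0 u v)
    rw [h2]
    have e1 : p u v - ε * (A u v - 0) = p u v - ε * A u v := by ring
    rw [e1, abs_of_nonneg (by linarith), abs_of_nonneg (le_of_lt hp)]
    ring_nf
    linarith

lemma key_zero (M : Set V) (p : V → V → ℝ) (τ : V → ℝ)
    (hp0 : ∀ u v, p u v = 0) (hrow : ∀ u, u ∉ M → ∑ v, p u v = τ u) :
    ∃ s : V → V → ℝ, (∀ u v, s v u = s u v) ∧ (∀ u v, |s u v| ≤ |p u v| / 2) ∧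
      (∀ u, u ∉ M → ∑ v, s u v = τ u / 2) := by
  refine ⟨fun _ _ => 0, fun _ _ => rfl, fun u v => by simp [hp0], fun u hu => ?_⟩
  have : τ u = 0 := by rw [← hrow u hu]; simp [hp0]
  simp [this]

lemma key (M : Set V) : ∀ n : ℕ, ∀ (p : V → V → ℝ) (τ : V → ℝ),
    (∀ u v, p v u = -p u v) → (∀ u, u ∉ M → 0 ≤ τ u) →
    (∀ u, u ∉ M → ∑ v, p u v = τ u) →
    ({uv : V × V | p uv.1 uv.2 ≠ 0}.ncard + {u | u ∉ M ∧ τ u ≠ 0}.ncard ≤ n) →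
    ∃ s : V → V → ℝ, (∀ u v, s v u = s u v) ∧ (∀ u v, |s u v| ≤ |p u v| / 2) ∧
      (∀ u, u ∉ M → ∑ v, s u v = τ u / 2) := by
  intro n
  induction n with
  | zero =>
    intro p τ hanti hτ hrow hm
    have hsupp : {uv : V × V | p uv.1 uv.2 ≠ 0}.ncard = 0 := by omega
    have hempty : {uv : V × V | p uv.1 uv.2 ≠ 0} = ∅ :=
      (Set.ncard_eq_zero (Set.toFinite _)).mp hsupp
    have hp0 : ∀ u v, p u v = 0 := by
      intro u v
      by_contra h
      have : (u, v) ∈ {uv : V × V | p uv.1 uv.2 ≠ 0} := h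
      rw [hempty] at this
      exact this
    exact key_zero M p τ hp0 hrow
  | succ n ih =>
    intro p τ hanti hτ hrow hm
    by_cases hp0 : ∀ u v, p u v = 0
    · exact key_zero M p τ hp0 hrow
    · push_neg at hp0
      obtain ⟨x0, y0, hxy0⟩ := hp0
      have hpos : ∃ x y, 0 < p x y := by
        rcases lt_or_gt_of_ne hxy0 with h | h
        · exact ⟨y0, x0, by rw [hanti x0 y0]; linarith⟩
        · exact ⟨x0, y0, h⟩
      obtain ⟨x, y, hxy⟩ := hpos
      obtain ⟨k, f, hk, hedge, hend⟩ := extract M p τ hanti hτ hrow x y hxy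
      classical
      -- the multiplicity function
      set A : V → V → ℝ :=
        fun u v => ∑ i ∈ Finset.range k, if f i = u ∧ f (i+1) = v then (1:ℝ) else 0 with hA
      have hA0 : ∀ u v, 0 ≤ A u v := by
        intro u v
        apply Finset.sum_nonneg
        intro i _
        split <;> norm_num
      have hAwit : ∀ u v, A u v ≠ 0 → ∃ i, i < k ∧ f i = u ∧ f (i+1) = v := by
        intro u v hne
        obtain ⟨i, hi, hne2⟩ := Finset.exists_ne_zero_of_sum_ne_zero hne
        refine ⟨i, Finset.mem_range.mp hi, ?_⟩
        by_contra hcond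
        simp only [if_neg hcond] at hne2
        exact hne2 rfl
      have hApos : ∀ u v, A u v ≠ 0 → 0 < p u v := by
        intro u v hne
        obtain ⟨i, hi, h1, h2⟩ := hAwit u v hne
        rw [← h1, ← h2]
        exact hedge i hi
      have hA1 : ∀ i, i < k → (1:ℝ) ≤ A (f i) (f (i+1)) := by
        intro i hik
        have hterm : (fun j => if f j = f i ∧ f (j+1) = f (i+1) then (1:ℝ) else 0) i = 1 := by simp
        calc (1:ℝ) = (fun j => if f j = f i ∧ f (j+1) = f (i+1) then (1:ℝ) else 0) i := hterm.symm
        _ ≤ A (f i) (f (i+1)) := Finset.single_le_sum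
            (f := fun j => if f j = f i ∧ f (j+1) = f (i+1) then (1:ℝ) else 0)
            (fun j _ => by split <;> norm_num) (Finset.mem_range.mpr hik)
      -- the per-edge minimum ratio
      set T : Finset ℝ :=
        (Finset.range k).image (fun i => p (f i) (f (i+1)) / A (f i) (f (i+1))) with hT
      have hTne : T.Nonempty := ⟨_, Finset.mem_image.mpr ⟨0, Finset.mem_range.mpr hk, rfl⟩⟩
      set ε0 : ℝ := T.min' hTne with hε0
      have hε0le : ∀ i, i < k → ε0 ≤ p (f i) (f (i+1)) / A (f i) (f (i+1)) := by
        intro i hi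
        exact Finset.min'_le T _ (Finset.mem_image.mpr ⟨i, Finset.mem_range.mpr hi, rfl⟩)
      have hε0mem : ∃ i, i < k ∧ ε0 = p (f i) (f (i+1)) / A (f i) (f (i+1)) := by
        have h1 : ε0 ∈ T := T.min'_mem hTne
        rw [hT] at h1
        obtain ⟨i, hi, heq⟩ := Finset.mem_image.mp h1
        exact ⟨i, Finset.mem_range.mp hi, heq.symm⟩
      have hε0pos : 0 < ε0 := by
        obtain ⟨i, hi, heq⟩ := hε0mem
        rw [heq]
        exact div_pos (hedge i hi) (lt_of_lt_of_le one_pos (hA1 i hi))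

      -- row sums of A
      have hArow : ∀ u, ∑ v, A u v = ∑ i ∈ Finset.range k, (if f i = u then (1:ℝ) else 0) := by
        intro u
        rw [hA]
        rw [Finset.sum_comm]
        exact Finset.sum_congr rfl fun i _ => sum_ind1 (f i) (f (i+1)) u
      have hAcol : ∀ u, ∑ v, A v u = ∑ i ∈ Finset.range k, (if f (i+1) = u then (1:ℝ) else 0) := by
        intro u
        rw [hA]
        rw [Finset.sum_comm]
        exact Finset.sum_congr rfl fun i _ => sum_ind2 (f i) (f (i+1)) u
      have hδrow : ∀ (ε : ℝ) (u : V), ∑ v, ε * (A u v - A v u)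
          = ε * ((if f 0 = u then (1:ℝ) else 0) - (if f k = u then 1 else 0)) := by
        intro ε u
        rw [← Finset.mul_sum]
        congr 1
        rw [Finset.sum_sub_distrib, hArow u, hAcol u, ← Finset.sum_sub_distrib]
        exact tele1 k f u
      have hcap : ∀ (ε : ℝ), 0 ≤ ε → ε ≤ ε0 → ∀ u v, A u v ≠ 0 → ε * A u v ≤ p u v := by
        intro ε hε0' hle u v hne
        obtain ⟨i, hi, h1, h2⟩ := hAwit u v hne
        have hAp : 0 < A u v := lt_of_le_of_ne (hA0 u v) (Ne.symm hne)
        have h3 := hε0le i hi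
        rw [h1, h2] at h3
        have h4 : ε0 * A u v ≤ p u v := (le_div_iff₀ hAp).mp h3
        nlinarith [hA0 u v]
      have hp0A : ∀ u v, p u v = 0 → A u v = 0 ∧ A v u = 0 := by
        intro u v hpz
        constructor
        · by_contra h; exact (ne_of_gt (hApos u v h)) hpz
        · by_contra h
          have h5 := hApos v u h
          rw [hanti u v] at h5
          linarith
      have hsuppsub : ∀ (ε : ℝ),
          {uv : V × V | p uv.1 uv.2 - ε * (A uv.1 uv.2 - A uv.2 uv.1) ≠ 0}
            ⊆ {uv : V × V | p uv.1 uv.2 ≠ 0} := by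
        intro ε uv huv
        by_contra h
        simp only [Set.mem_setOf_eq, not_not] at h
        obtain ⟨h1, h2⟩ := hp0A uv.1 uv.2 h
        apply huv
        simp only [Set.mem_setOf_eq, h, h1, h2]
        ring
      have hwit : ∀ (ε : ℝ), ε = ε0 → ∃ w : V × V, (p w.1 w.2 ≠ 0) ∧
          (p w.1 w.2 - ε * (A w.1 w.2 - A w.2 w.1) = 0) := by
        intro ε hc
        obtain ⟨i, hi, heq⟩ := hε0mem
        refine ⟨(f i, f (i+1)), ne_of_gt (hedge i hi), ?_⟩
        have hArev : A (f (i+1)) (f i) = 0 := by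
          by_contra h
          have h5 := hApos _ _ h
          have h2 := hedge i hi
          rw [hanti (f i) (f (i+1))] at h5
          linarith
        have hAne : A (f i) (f (i+1)) ≠ 0 := by
          have := hA1 i hi; intro h; rw [h] at this; linarith
        show p (f i) (f (i+1)) - ε * (A (f i) (f (i+1)) - A (f (i+1)) (f i)) = 0
        rw [hArev, hc, heq]
        field_simp
        ring
      have hsupplt : ∀ (ε : ℝ), ε = ε0 →
          {uv : V × V | p uv.1 uv.2 - ε * (A uv.1 uv.2 - A uv.2 uv.1) ≠ 0}.ncard
            < {uv : V × V | p uv.1 uv.2 ≠ 0}.ncard := by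
        intro ε hc
        obtain ⟨w, hw1, hw2⟩ := hwit ε hc
        apply Set.ncard_lt_ncard
        · rw [Set.ssubset_iff_of_subset (hsuppsub ε)]
          refine ⟨w, hw1, ?_⟩
          simp only [Set.mem_setOf_eq, not_not]
          exact hw2
        · exact Set.toFinite _
      rcases hend with hcl | ⟨hfkM, hstart⟩
      · -- closed walk : subtract the cycle, s unchanged
        have hanti' : ∀ u v, (fun u v => p u v - ε0 * (A u v - A v u)) v u
            = -((fun u v => p u v - ε0 * (A u v - A v u)) u v) := by
          intro u v; dsimp only; rw [hanti u v]; ring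
        have hrow' : ∀ u, u ∉ M → ∑ v, (p u v - ε0 * (A u v - A v u)) = τ u := by
          intro u hu
          have h2 := hδrow ε0 u
          rw [hcl] at h2
          rw [Finset.sum_sub_distrib, hrow u hu, h2]
          ring
        have hmeas : {uv : V × V | p uv.1 uv.2 - ε0 * (A uv.1 uv.2 - A uv.2 uv.1) ≠ 0}.ncard
            + {u | u ∉ M ∧ τ u ≠ 0}.ncard ≤ n := by
          have := hsupplt ε0 rfl
          omega
        obtain ⟨s, hs1, hs2, hs3⟩ := ih (fun u v => p u v - ε0 * (A u v - A v u)) τ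
          hanti' hτ hrow' hmeas
        refine ⟨s, hs1, fun u v => ?_, hs3⟩
        have hEB := edge_bound p A ε0 (le_of_lt hε0pos) hA0 hApos hanti
          (hcap ε0 (le_of_lt hε0pos) le_rfl) u v
        have h1 := hs2 u v
        have h2 : 0 ≤ ε0 * (A u v + A v u) :=
          mul_nonneg (le_of_lt hε0pos) (add_nonneg (hA0 u v) (hA0 v u))
        calc |s u v| ≤ |p u v - ε0 * (A u v - A v u)| / 2 := h1
          _ ≤ |p u v| / 2 := by linarith
      · -- open path to M
        set ε : ℝ := if f 0 ∈ M then ε0 else min ε0 (τ (f 0)) with hεdef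
        have hst2 : f 0 ∉ M → 0 < τ (f 0) := by
          intro h
          rcases hstart with h1 | h1
          · exact absurd h1 h
          · exact h1.2
        have hεpos : 0 < ε := by
          rw [hεdef]; split
          · exact hε0pos
          · next h => exact lt_min hε0pos (hst2 h)
        have hεle : ε ≤ ε0 := by
          rw [hεdef]; split
          · exact le_rfl
          · exact min_le_left _ _
        have hετ : f 0 ∉ M → ε ≤ τ (f 0) := by
          intro h; rw [hεdef, if_neg h]; exact min_le_right _ _
        set τ' : V → ℝ := fun u => if u = f 0 then τ u - ε else τ u with hτ'def
        have hanti' : ∀ u v, (fun u v => p u v - ε * (A u v - A v u)) v u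
            = -((fun u v => p u v - ε * (A u v - A v u)) u v) := by
          intro u v; dsimp only; rw [hanti u v]; ring
        have hrow' : ∀ u, u ∉ M → ∑ v, (p u v - ε * (A u v - A v u)) = τ' u := by
          intro u hu
          have h2 := hδrow ε u
          have hfk : (if f k = u then (1:ℝ) else 0) = 0 := by
            rw [if_neg]; intro h; exact hu (h ▸ hfkM)
          rw [hfk] at h2
          rw [Finset.sum_sub_distrib, hrow u hu, h2]
          simp only [hτ'def]
          by_cases hu0 : u = f 0
          · rw [if_pos hu0, if_pos hu0.symm]; ring
          · rw [if_neg hu0, if_neg (fun h => hu0 h.symm)]; ring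
        have hτ'0 : ∀ u, u ∉ M → 0 ≤ τ' u := by
          intro u hu
          simp only [hτ'def]
          by_cases hu0 : u = f 0
          · rw [if_pos hu0]
            have := hετ (hu0 ▸ hu)
            have h4 := hτ u hu
            rw [hu0]
            rw [hu0] at h4
            linarith
          · rw [if_neg hu0]; exact hτ u hu
        have hτsub : {u | u ∉ M ∧ τ' u ≠ 0} ⊆ {u | u ∉ M ∧ τ u ≠ 0} := by
          intro u ⟨hu, hne⟩
          refine ⟨hu, ?_⟩
          by_cases hu0 : u = f 0
          · have := hst2 (hu0 ▸ hu)
            rw [hu0]; exact ne_of_gt this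
          · simp only [hτ'def] at hne
            rw [if_neg hu0] at hne
            exact hne
        have hmeas : {uv : V × V | p uv.1 uv.2 - ε * (A uv.1 uv.2 - A uv.2 uv.1) ≠ 0}.ncard
            + {u | u ∉ M ∧ τ' u ≠ 0}.ncard ≤ n := by
          by_cases hεc : ε = ε0
          · have h1 := hsupplt ε hεc
            have h2 : {u | u ∉ M ∧ τ' u ≠ 0}.ncard ≤ {u | u ∉ M ∧ τ u ≠ 0}.ncard :=
              Set.ncard_le_ncard hτsub (Set.toFinite _)
            omega
          · have hf0 : f 0 ∉ M := by
              intro h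
              apply hεc
              rw [hεdef, if_pos h]
            have hmin : ε = τ (f 0) := by
              rcases min_cases ε0 (τ (f 0)) with ⟨h1, _⟩ | ⟨h1, _⟩
              · exact absurd (by rw [hεdef, if_neg hf0, h1]) hεc
              · rw [hεdef, if_neg hf0, h1]
            have hτ'' : τ' (f 0) = 0 := by
              simp only [hτ'def, if_pos rfl]
              rw [hmin]; ring
            have h1 : {uv : V × V | p uv.1 uv.2 - ε * (A uv.1 uv.2 - A uv.2 uv.1) ≠ 0}.ncard
                ≤ {uv : V × V | p uv.1 uv.2 ≠ 0}.ncard :=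
              Set.ncard_le_ncard (hsuppsub ε) (Set.toFinite _)
            have h2 : {u | u ∉ M ∧ τ' u ≠ 0}.ncard < {u | u ∉ M ∧ τ u ≠ 0}.ncard := by
              apply Set.ncard_lt_ncard
              · rw [Set.ssubset_iff_of_subset hτsub]
                refine ⟨f 0, ⟨hf0, ne_of_gt (hst2 hf0)⟩, ?_⟩
                simp only [Set.mem_setOf_eq, not_and, not_not]
                intro _
                exact hτ''
              · exact Set.toFinite _
            omega
        obtain ⟨s', hs1', hs2', hs3'⟩ := ih (fun u v => p u v - ε * (A u v - A v u)) τ'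
          hanti' hτ'0 hrow' hmeas
        set sW : V → V → ℝ := fun u v => (ε/2) * ∑ i ∈ Finset.range k,
          (-1:ℝ)^i * ((if f i = u ∧ f (i+1) = v then (1:ℝ) else 0)
            + (if f i = v ∧ f (i+1) = u then 1 else 0)) with hsWdef
        have hsWsym : ∀ u v, sW v u = sW u v := by
          intro u v
          simp only [hsWdef]
          congr 1
          apply Finset.sum_congr rfl
          intro i _
          ring
        have hsWbound : ∀ u v, |sW u v| ≤ (ε/2) * (A u v + A v u) := by
          intro u v
          simp only [hsWdef]
          rw [abs_mul, abs_of_nonneg (by linarith : (0:ℝ) ≤ ε/2)]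
          have h1 : |∑ i ∈ Finset.range k, (-1:ℝ)^i *
              ((if f i = u ∧ f (i+1) = v then (1:ℝ) else 0)
                + (if f i = v ∧ f (i+1) = u then 1 else 0))|
              ≤ ∑ i ∈ Finset.range k,
              ((if f i = u ∧ f (i+1) = v then (1:ℝ) else 0)
                + (if f i = v ∧ f (i+1) = u then 1 else 0)) := by
            refine le_trans (Finset.abs_sum_le_sum_abs _ _) ?_
            apply Finset.sum_le_sum
            intro i _
            rw [abs_mul, abs_pow, abs_neg, abs_one, one_pow, one_mul]
            rw [abs_of_nonneg]
            positivity
          have h2 : ∑ i ∈ Finset.range k,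
              ((if f i = u ∧ f (i+1) = v then (1:ℝ) else 0)
                + (if f i = v ∧ f (i+1) = u then 1 else 0)) = A u v + A v u := by
            rw [Finset.sum_add_distrib, hA]
          have h3 : 0 ≤ ε / 2 := by linarith
          have h4 := mul_le_mul_of_nonneg_left h1 h3
          rw [h2] at h4
          exact h4
        have hsWrow : ∀ u, u ∉ M → ∑ v, sW u v = (ε/2) * (if f 0 = u then (1:ℝ) else 0) := by
          intro u hu
          simp only [hsWdef]
          rw [← Finset.mul_sum]
          congr 1
          rw [Finset.sum_comm]
          have h1 : ∀ i, i ∈ Finset.range k → (∑ v, (-1:ℝ)^i *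
              ((if f i = u ∧ f (i+1) = v then (1:ℝ) else 0)
                + (if f i = v ∧ f (i+1) = u then 1 else 0)))
              = (-1:ℝ)^i * ((if f i = u then (1:ℝ) else 0) + (if f (i+1) = u then 1 else 0)) := by
            intro i _
            rw [← Finset.mul_sum, Finset.sum_add_distrib, sum_ind1, sum_ind2]
          rw [Finset.sum_congr rfl h1, tele2 k f u]
          have hfk : (if f k = u then (1:ℝ) else 0) = 0 := by
            rw [if_neg]; intro h; exact hu (h ▸ hfkM)
          rw [hfk]
          ring
        refine ⟨fun u v => s' u v + sW u v, ?_, ?_, ?_⟩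
        · intro u v; dsimp only; rw [hs1' u v, hsWsym u v]
        · intro u v
          have h1 := hs2' u v
          have h2 := hsWbound u v
          have hEB := edge_bound p A ε (le_of_lt hεpos) hA0 hApos hanti
            (hcap ε (le_of_lt hεpos) hεle) u v
          calc |s' u v + sW u v| ≤ |s' u v| + |sW u v| := abs_add_le _ _
            _ ≤ |p u v - ε * (A u v - A v u)| / 2 + (ε/2) * (A u v + A v u) := by linarith
            _ ≤ |p u v| / 2 := by linarith
        · intro u hu
          rw [Finset.sum_add_distrib, hs3' u hu, hsWrow u hu]
          simp only [hτ'def]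
          by_cases hu0 : u = f 0
          · rw [if_pos hu0, if_pos hu0.symm]; ring
          · rw [if_neg hu0, if_neg (fun h => hu0 h.symm)]; ring


theorem aux_main
    (wt : V → V → ℝ) (hsymm : ∀ u v, wt u v = wt v u) (hnonneg : ∀ u v, 0 ≤ wt u v)
    (σ : V → ℝ) (hσnonneg : ∀ u, 0 ≤ σ u) (hσsum : ∑ u, σ u = 1)
    (M : Set V) (hM : M.Nonempty)
    (wt' : V × Bool → V × Bool → ℝ)
    (hwt' : ∀ a b, wt' a b = if a.2 ≠ b.2 then wt a.1 b.1 else 0)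
    (σ' : V × Bool → ℝ)
    (hσ' : ∀ a, σ' a = if a.2 = false then σ a.1 else 0)
    (M' : Set (V × Bool)) (hM' : M' = {a | a.1 ∈ M}) :
    ((1 / 2) * ∑ a : V × Bool, ∑ b : V × Bool, wt' a b
        = 2 * ((1 / 2) * ∑ u, ∑ v, wt u v))
    ∧ sInf {x | ∃ p, IsFlow wt' σ' M' p ∧ x = (1 / 2) * ∑ a, ∑ b, (p a b) ^ 2 / wt' a b}
      ≤ sInf {x | ∃ p, IsFlow wt σ M p ∧ x = (1 / 2) * ∑ u, ∑ v, (p u v) ^ 2 / wt u v} := by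
  constructor
  · -- total weight
    have e1 : ∑ a : V × Bool, ∑ b : V × Bool, wt' a b = ∑ u, ∑ v, (wt u v + wt u v) := by
      simp only [Fintype.sum_prod_type, Fintype.sum_bool, hwt']
      simp only [ne_eq]
      simp [Finset.sum_add_distrib]
    rw [e1]
    have e2 : ∑ u, ∑ v, (wt u v + wt u v) = ∑ u, (∑ v, wt u v + ∑ v, wt u v) := by
      exact Finset.sum_congr rfl fun u _ => Finset.sum_add_distrib
    rw [e2, Finset.sum_add_distrib]
    ring
  · classical
    set S : Set ℝ := {x | ∃ p, IsFlow wt σ M p ∧ x = (1 / 2) * ∑ u, ∑ v, (p u v) ^ 2 / wt u v} with hS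
    set S' : Set ℝ := {x | ∃ p, IsFlow wt' σ' M' p ∧ x = (1 / 2) * ∑ a, ∑ b, (p a b) ^ 2 / wt' a b} with hS'
    have hwt'0 : ∀ a b, 0 ≤ wt' a b := by
      intro a b; rw [hwt']; split
      · exact hnonneg _ _
      · exact le_rfl
    have hS'bdd : BddBelow S' := by
      refine ⟨0, fun x hx => ?_⟩
      obtain ⟨p', hp', rfl⟩ := hx
      apply mul_nonneg (by norm_num)
      apply Finset.sum_nonneg; intro a _
      apply Finset.sum_nonneg; intro b _
      exact div_nonneg (sq_nonneg _) (hwt'0 a b)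
    by_cases hSne : S.Nonempty
    · apply le_csInf hSne
      rintro b ⟨p, ⟨hpanti, hpsupp, hprow⟩, rfl⟩
      obtain ⟨s, hssym, hsbound, hsrow⟩ :=
        key M ({uv : V × V | p uv.1 uv.2 ≠ 0}.ncard + {u | u ∉ M ∧ σ u ≠ 0}.ncard)
          p σ hpanti (fun u _ => hσnonneg u) hprow le_rfl
      have hsp : ∀ u v, p u v = 0 → s u v = 0 := by
        intro u v h
        have h2 := hsbound u v
        rw [h] at h2
        simp at h2
        exact h2
      have hasupp : ∀ u v, p u v / 2 + s u v ≠ 0 → 0 < wt u v := by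
        intro u v h
        apply hpsupp u v
        intro hz
        rw [hz, hsp u v hz] at h
        simp at h
      have harow : ∀ u, u ∉ M → ∑ v, (p u v / 2 + s u v) = σ u := by
        intro u hu
        rw [Finset.sum_add_distrib, ← Finset.sum_div, hprow u hu, hsrow u hu]
        ring
      have hacol : ∀ u, u ∉ M → ∑ v, (p v u / 2 + s v u) = 0 := by
        intro u hu
        have h1 : ∑ v, (p v u / 2 + s v u) = ∑ v, (-(p u v) / 2 + s u v) := by
          apply Finset.sum_congr rfl
          intro v _
          rw [hpanti u v, hssym u v]
        rw [h1, Finset.sum_add_distrib, hsrow u hu]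
        have h2 : ∑ v, (-(p u v) / 2) = -(σ u) / 2 := by
          rw [← Finset.sum_div, Finset.sum_neg_distrib, hprow u hu]
        rw [h2]; ring
      set q : V × Bool → V × Bool → ℝ := fun x y =>
        if x.2 = false ∧ y.2 = true then p x.1 y.1 / 2 + s x.1 y.1
        else if x.2 = true ∧ y.2 = false then -(p y.1 x.1 / 2 + s y.1 x.1) else 0 with hq
      have hq1 : ∀ u v, q (u, false) (v, true) = p u v / 2 + s u v := by intro u v; simp [hq]
      have hq2 : ∀ u v, q (u, true) (v, false) = -(p v u / 2 + s v u) := by intro u v; simp [hq]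
      have hq3 : ∀ u v (c : Bool), q (u, c) (v, c) = 0 := by intro u v c; cases c <;> simp [hq]
      have hqflow : IsFlow wt' σ' M' q := by
        refine ⟨?_, ?_, ?_⟩
        · rintro ⟨u, bu⟩ ⟨v, bv⟩
          cases bu <;> cases bv <;> simp [hq1, hq2, hq3]
        · rintro ⟨u, bu⟩ ⟨v, bv⟩ h
          cases bu <;> cases bv
          · rw [hq3] at h; exact absurd rfl h
          · rw [hq1] at h
            have h5 := hasupp u v h
            have he : wt' (u, false) (v, true) = wt u v := by rw [hwt']; simp
            rw [he]; exact h5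
          · rw [hq2] at h
            have h4 : p v u / 2 + s v u ≠ 0 := by intro hz; rw [hz] at h; simp at h
            have h5 := hasupp v u h4
            have he : wt' (u, true) (v, false) = wt u v := by rw [hwt']; simp
            rw [he, hsymm u v]; exact h5
          · rw [hq3] at h; exact absurd rfl h
        · rintro ⟨u, bu⟩ hx
          have hu : u ∉ M := by
            intro h
            apply hx
            rw [hM']
            exact h
          cases bu
          · rw [Fintype.sum_prod_type]
            have h6 : ∀ v, ∑ j : Bool, q (u, false) (v, j) = p u v / 2 + s u v := by
              intro v
              rw [Fintype.sum_bool, hq1, hq3]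
              ring
            rw [Finset.sum_congr rfl fun v _ => h6 v, harow u hu, hσ']
            simp
          · rw [Fintype.sum_prod_type]
            have h6 : ∀ v, ∑ j : Bool, q (u, true) (v, j) = -(p v u / 2 + s v u) := by
              intro v
              rw [Fintype.sum_bool, hq2, hq3]
              ring
            rw [Finset.sum_congr rfl fun v _ => h6 v, Finset.sum_neg_distrib, hacol u hu, hσ']
            simp
      -- energy computation
      have hb1 : ∀ u, ∑ c : V × Bool, (q (u, true) c) ^ 2 / wt' (u, true) c
          = ∑ v, (p v u / 2 + s v u) ^ 2 / wt u v := by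
        intro u
        rw [Fintype.sum_prod_type]
        apply Finset.sum_congr rfl
        intro v _
        rw [Fintype.sum_bool, hq2, hq3, hwt', hwt']
        norm_num
        ring
      have hb2 : ∀ u, ∑ c : V × Bool, (q (u, false) c) ^ 2 / wt' (u, false) c
          = ∑ v, (p u v / 2 + s u v) ^ 2 / wt u v := by
        intro u
        rw [Fintype.sum_prod_type]
        apply Finset.sum_congr rfl
        intro v _
        rw [Fintype.sum_bool, hq1, hq3, hwt', hwt']
        norm_num
      have hqen : ∑ a, ∑ c, (q a c) ^ 2 / wt' a c
          = ∑ u, ∑ v, (p u v / 2 + s u v) ^ 2 / wt u v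
            + ∑ u, ∑ v, (p v u / 2 + s v u) ^ 2 / wt u v := by
        rw [Fintype.sum_prod_type, ← Finset.sum_add_distrib]
        apply Finset.sum_congr rfl
        intro u _
        rw [Fintype.sum_bool, hb1 u, hb2 u]
        ring
      have hswap : ∑ u, ∑ v, (p v u / 2 + s v u) ^ 2 / wt u v
          = ∑ u, ∑ v, (p u v / 2 + s u v) ^ 2 / wt u v := by
        rw [Finset.sum_comm]
        apply Finset.sum_congr rfl
        intro u _
        apply Finset.sum_congr rfl
        intro v _
        rw [hsymm u v]
      have hcross : ∑ u, ∑ v, (p u v * s u v) / wt u v = 0 := by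
        have h1 : ∑ u, ∑ v, (p u v * s u v) / wt u v
            = ∑ u, ∑ v, -((p u v * s u v) / wt u v) := by
          nth_rewrite 1 [Finset.sum_comm]
          apply Finset.sum_congr rfl
          intro u _
          apply Finset.sum_congr rfl
          intro v _
          rw [hpanti u v, hssym u v, hsymm v u]
          ring
        have h2 : ∑ u, ∑ v, -((p u v * s u v) / wt u v)
            = -∑ u, ∑ v, (p u v * s u v) / wt u v := by
          rw [← Finset.sum_neg_distrib]
          apply Finset.sum_congr rfl
          intro u _
          rw [Finset.sum_neg_distrib]
        rw [h2] at h1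
        linarith
      have hterm : ∀ u v, (p u v / 2 + s u v) ^ 2 / wt u v
          = (p u v ^ 2 / 4) / wt u v + (p u v * s u v) / wt u v + s u v ^ 2 / wt u v := by
        intro u v
        rw [show (p u v / 2 + s u v) ^ 2 = p u v ^ 2 / 4 + p u v * s u v + s u v ^ 2 from by ring]
        rw [add_div, add_div]
      have hD : ∑ u, ∑ v, s u v ^ 2 / wt u v ≤ ∑ u, ∑ v, (p u v ^ 2 / 4) / wt u v := by
        apply Finset.sum_le_sum
        intro u _
        apply Finset.sum_le_sum
        intro v _
        rcases (hnonneg u v).eq_or_lt with hw | hw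
        · rw [← hw]; simp
        · rw [div_le_div_iff_of_pos_right hw]
          nlinarith [hsbound u v, abs_nonneg (s u v), abs_nonneg (p u v),
            sq_abs (s u v), sq_abs (p u v)]
      have hE : ∑ u, ∑ v, (p u v / 2 + s u v) ^ 2 / wt u v
          = ∑ u, ∑ v, (p u v ^ 2 / 4) / wt u v + ∑ u, ∑ v, (p u v * s u v) / wt u v
            + ∑ u, ∑ v, s u v ^ 2 / wt u v := by
        rw [← Finset.sum_add_distrib, ← Finset.sum_add_distrib]
        apply Finset.sum_congr rfl
        intro u _
        rw [← Finset.sum_add_distrib, ← Finset.sum_add_distrib]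
        exact Finset.sum_congr rfl fun v _ => hterm u v
      have hC : ∑ u, ∑ v, (p u v ^ 2 / 4) / wt u v
          = (∑ u, ∑ v, p u v ^ 2 / wt u v) / 4 := by
        rw [Finset.sum_div]
        apply Finset.sum_congr rfl
        intro u _
        rw [Finset.sum_div]
        apply Finset.sum_congr rfl
        intro v _
        ring
      have hD2 : ∑ u, ∑ v, s u v ^ 2 / wt u v ≤ (∑ u, ∑ v, p u v ^ 2 / wt u v) / 4 := by
        rw [hC] at hD; exact hD
      have hen2 : (1 / 2) * ∑ a, ∑ c, (q a c) ^ 2 / wt' a c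
          ≤ (1 / 2) * ∑ u, ∑ v, (p u v) ^ 2 / wt u v := by
        rw [hqen, hswap, hE, hcross, hC]
        linarith [hD2]
      calc sInf S' ≤ (1 / 2) * ∑ a, ∑ c, (q a c) ^ 2 / wt' a c :=
            csInf_le hS'bdd ⟨q, hqflow, rfl⟩
        _ ≤ (1 / 2) * ∑ u, ∑ v, (p u v) ^ 2 / wt u v := hen2
    · have hempty : S = ∅ := Set.not_nonempty_iff_eq_empty.mp hSne
      have hempty' : S' = ∅ := by
        rw [Set.eq_empty_iff_forall_notMem]
        rintro x ⟨p', ⟨h1', h2', h3'⟩, _⟩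
        apply hSne
        have hzero : ∀ (u v : V) (c : Bool), p' (u, c) (v, c) = 0 := by
          intro u v c
          by_contra h
          have h5 := h2' _ _ h
          rw [hwt'] at h5
          simp at h5
        refine ⟨(1/2) * ∑ u, ∑ v, ((p' (u,false) (v,true) + p' (u,true) (v,false)))^2/wt u v,
          ⟨fun u v => p' (u,false) (v,true) + p' (u,true) (v,false), ⟨?_, ?_, ?_⟩, rfl⟩⟩
        · intro u v
          dsimp only
          rw [h1' (u, true) (v, false), h1' (u, false) (v, true)]
          ring
        · intro u v h
          dsimp only at h
          by_cases hz : p' (u, false) (v, true) ≠ 0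
          · have h5 := h2' _ _ hz
            rw [hwt'] at h5
            simpa using h5
          · push_neg at hz
            have hz2 : p' (u, true) (v, false) ≠ 0 := by
              intro hz2; rw [hz, hz2] at h; simp at h
            have h5 := h2' _ _ hz2
            rw [hwt'] at h5
            simpa using h5
        · intro u hu
          have hM1 : ((u, false) : V × Bool) ∉ M' := by rw [hM']; exact hu
          have hM2 : ((u, true) : V × Bool) ∉ M' := by rw [hM']; exact hu
          have h4 := h3' (u, false) hM1
          have h5 := h3' (u, true) hM2
          rw [Fintype.sum_prod_type] at h4 h5
          have h6 : ∀ v, ∑ j : Bool, p' (u, false) (v, j) = p' (u, false) (v, true) := by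
            intro v
            rw [Fintype.sum_bool, hzero]
            ring
          have h7 : ∀ v, ∑ j : Bool, p' (u, true) (v, j) = p' (u, true) (v, false) := by
            intro v
            rw [Fintype.sum_bool, hzero]
            ring
          rw [Finset.sum_congr rfl fun v _ => h6 v, hσ'] at h4
          rw [Finset.sum_congr rfl fun v _ => h7 v, hσ'] at h5
          simp only [] at h4 h5
          rw [Finset.sum_add_distrib, h4, h5]
          simp
      rw [hempty, hempty', Real.sInf_empty]


end BDCaux

/-- Bipartite double cover: for a finite weighted graph `G` on `V`, the graph
`G'` on `V × {0,1}` with `w'_{(u,0)(v,1)} = w'_{(u,1)(v,0)} = w_{uv}` has total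
weight `W' = 2W`, and its effective resistance from `σ'` (`σ` placed on level
`0`) to `M' = M × {0,1}` is at most `R_{σ,M}(G)`. -/
theorem bipartite_double_cover_weight_and_resistance
    (wt : V → V → ℝ) (hsymm : ∀ u v, wt u v = wt v u) (hnonneg : ∀ u v, 0 ≤ wt u v)
    (σ : V → ℝ) (hσnonneg : ∀ u, 0 ≤ σ u) (hσsum : ∑ u, σ u = 1)
    (M : Set V) (hM : M.Nonempty)
    (wt' : V × Bool → V × Bool → ℝ)
    (hwt' : ∀ a b, wt' a b = if a.2 ≠ b.2 then wt a.1 b.1 else 0)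
    (σ' : V × Bool → ℝ)
    (hσ' : ∀ a, σ' a = if a.2 = false then σ a.1 else 0)
    (M' : Set (V × Bool)) (hM' : M' = {a | a.1 ∈ M}) :
    ((1 / 2) * ∑ a : V × Bool, ∑ b : V × Bool, wt' a b
        = 2 * ((1 / 2) * ∑ u, ∑ v, wt u v))
    ∧ effRes wt' σ' M' ≤ effRes wt σ M := by
  classical
  exact BDCaux.aux_main wt hsymm hnonneg σ hσnonneg hσsum M hM wt' hwt' σ' hσ' M' hM'

end
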